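/- Let m : (0, r₊) → ℝ be continuously differentiable with m'(r) = 4π r² ρ(r), where ρ is continuous on (0, r₊] with ρ(r₊) = 0, and suppose 1 − 2G m(r)/(c² r) > 0 for all r ∈ (0, r₊). If additionally m(r) → m₊ as r → r₊⁻ with 2G m₊/(c² r₊) = 1, then the function f(r) = 1 − 2G m(r)/(c² r) satisfies f'(r) → 1/r₊ as r → r₊⁻, which contradicts f > 0 on (0, r₊) and f(r₊) = 0. Hence κ := 1 − 2G m₊/(c² r₊) > 0. -/

import Mathlib

open Filter Topology

theorem kappa_positive (G c rp mp : ℝ) (hG : 0 < G) (hc : 0 < c) (hr : 0 < rp)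
    (m ρ : ℝ → ℝ)
    (hm : ∀ r ∈ Set.Ioo 0 rp, HasDerivAt m (4 * Real.pi * r ^ 2 * ρ r) r)
    (hρ : ContinuousOn ρ (Set.Ioc 0 rp)) (hρp : ρ rp = 0)
    (hf : ∀ r ∈ Set.Ioo 0 rp, 0 < 1 - 2 * G * m r / (c ^ 2 * r))
    (hmp : Tendsto m (nhdsWithin rp (Set.Iio rp)) (nhds mp)) :
    (2 * G * mp / (c ^ 2 * rp) = 1 →
        Tendsto (deriv fun r => 1 - 2 * G * m r / (c ^ 2 * r))
          (nhdsWithin rp (Set.Iio rp)) (nhds (1 / rp)) ∧ False) ∧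
      0 < 1 - 2 * G * mp / (c ^ 2 * rp) := by
  have hc2 : (c : ℝ) ^ 2 ≠ 0 := by positivity
  set f : ℝ → ℝ := fun r => 1 - 2 * G * m r / (c ^ 2 * r) with hfdef
  set D : ℝ → ℝ := fun r =>
    -(2 * G / c ^ 2 * ((4 * Real.pi * r ^ 2 * ρ r * r - m r * 1) / r ^ 2)) with hDdef
  -- derivative of f on the open interval
  have hder : ∀ r ∈ Set.Ioo 0 rp, HasDerivAt f (D r) r := by
    intro r hrm
    have hr0 : r ≠ 0 := ne_of_gt hrm.1
    have h1 : HasDerivAt (fun x => m x / x)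
        ((4 * Real.pi * r ^ 2 * ρ r * r - m r * 1) / r ^ 2) r := by
      have := (hm r hrm).div (hasDerivAt_id' r) hr0; exact this
    have h2 := (h1.const_mul (2 * G / c ^ 2)).const_sub 1
    have hfun : f = fun x => 1 - 2 * G / c ^ 2 * (m x / x) := by
      funext x
      simp only [hfdef]
      ring
    rw [hfun]
    exact h2
  -- limits of the ingredients along 𝓝[<] rp
  have hid : Tendsto (fun r : ℝ => r) (nhdsWithin rp (Set.Iio rp)) (nhds rp) :=
    (continuous_id.tendsto rp).mono_left nhdsWithin_le_nhds
  have hρ0 : Tendsto ρ (nhdsWithin rp (Set.Iio rp)) (nhds 0) := by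
    have h1 : Tendsto ρ (nhdsWithin rp (Set.Ioc 0 rp)) (nhds 0) := by
      have := hρ rp ⟨hr, le_refl rp⟩
      rwa [ContinuousWithinAt, hρp] at this
    have h2 : nhdsWithin rp (Set.Iio rp) = nhdsWithin rp (Set.Ioo 0 rp) :=
      (nhdsWithin_Ioo_eq_nhdsLT hr).symm
    rw [h2]
    exact h1.mono_left (nhdsWithin_mono rp Set.Ioo_subset_Ioc_self)
  have hrp2 : (rp : ℝ) ^ 2 ≠ 0 := by positivity
  have hD_tendsto : Tendsto D (nhdsWithin rp (Set.Iio rp))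
      (nhds (-(2 * G / c ^ 2 * ((4 * Real.pi * rp ^ 2 * (0 : ℝ) * rp - mp * 1) / rp ^ 2)))) := by
    apply Tendsto.neg
    apply Tendsto.const_mul
    apply Tendsto.div _ (by simpa using hid.pow 2) hrp2
    exact ((((tendsto_const_nhds.mul (hid.pow 2)).mul hρ0).mul hid).sub (hmp.mul tendsto_const_nhds))
  -- f tends to κ
  have hflim : Tendsto f (nhdsWithin rp (Set.Iio rp))
      (nhds (1 - 2 * G * mp / (c ^ 2 * rp))) := by
    apply Tendsto.const_sub
    exact (hmp.const_mul (2 * G)).div (hid.const_mul (c ^ 2))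
      (by positivity)
  -- deriv f agrees with D near rp from the left
  have hIoo : Set.Ioo 0 rp ∈ nhdsWithin rp (Set.Iio rp) :=
    Ioo_mem_nhdsLT_of_mem ⟨hr, le_refl rp⟩
  have hev : ∀ᶠ r in nhdsWithin rp (Set.Iio rp), D r = deriv f r := by
    filter_upwards [hIoo] with r hrm
    exact ((hder r hrm).deriv).symm
  -- the main contradiction, given the horizon condition
  have key : 2 * G * mp / (c ^ 2 * rp) = 1 →
      Tendsto (deriv f) (nhdsWithin rp (Set.Iio rp)) (nhds (1 / rp)) ∧ False := by
    intro h
    have heq : 2 * G * mp = c ^ 2 * rp := by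
      field_simp at h; linarith
    have hval : -(2 * G / c ^ 2 * ((4 * Real.pi * rp ^ 2 * (0 : ℝ) * rp - mp * 1) / rp ^ 2))
        = 1 / rp := by
      field_simp
      nlinarith [heq]
    have hD' : Tendsto D (nhdsWithin rp (Set.Iio rp)) (nhds (1 / rp)) := by
      rwa [hval] at hD_tendsto
    have hderiv_tendsto : Tendsto (deriv f) (nhdsWithin rp (Set.Iio rp)) (nhds (1 / rp)) :=
      hD'.congr' hev
    refine ⟨hderiv_tendsto, ?_⟩
    -- f tends to 0
    have hflim0 : Tendsto f (nhdsWithin rp (Set.Iio rp)) (nhds 0) := by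
      have : (1 : ℝ) - 2 * G * mp / (c ^ 2 * rp) = 0 := by rw [h]; ring
      rwa [this] at hflim
    -- D is eventually positive
    have hpos : ∀ᶠ r in nhdsWithin rp (Set.Iio rp), 0 < D r :=
      hD'.eventually (eventually_gt_nhds (by positivity))
    have hS : {r | 0 < D r} ∩ Set.Ioo 0 rp ∈ nhdsWithin rp (Set.Iio rp) :=
      Filter.inter_mem hpos hIoo
    obtain ⟨a, ha, hsub⟩ := mem_nhdsLT_iff_exists_Ioo_subset.mp hS
    have hb : max a 0 < rp := max_lt ha hr
    set b := max a 0 with hbdef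
    have hsub' : Set.Ioo b rp ⊆ {r | 0 < D r} ∩ Set.Ioo 0 rp := fun x hx =>
      hsub ⟨lt_of_le_of_lt (le_max_left a 0) hx.1, hx.2⟩
    have hmono : StrictMonoOn f (Set.Ioo b rp) := by
      apply strictMonoOn_of_deriv_pos (convex_Ioo b rp)
      · intro x hx
        exact ((hder x (hsub' hx).2).differentiableAt).continuousAt.continuousWithinAt
      · intro x hx
        rw [interior_Ioo] at hx
        rw [(hder x (hsub' hx).2).deriv]
        exact (hsub' hx).1
    set x0 := (b + rp) / 2 with hx0def
    have hx0 : x0 ∈ Set.Ioo b rp := ⟨by simp [hx0def]; linarith, by simp [hx0def]; linarith⟩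
    have hx0' : x0 ∈ Set.Ioo 0 rp := (hsub' hx0).2
    have hfx0 : 0 < f x0 := hf x0 hx0'
    have hev2 : ∀ᶠ y in nhdsWithin rp (Set.Iio rp), f x0 ≤ f y := by
      filter_upwards [Ioo_mem_nhdsLT hx0.2] with y hy
      exact le_of_lt (hmono hx0 ⟨lt_trans hx0.1 hy.1, hy.2⟩ hy.1)
    have : f x0 ≤ 0 := ge_of_tendsto hflim0 hev2
    linarith
  refine ⟨key, ?_⟩
  -- κ ≥ 0
  have hge : 0 ≤ 1 - 2 * G * mp / (c ^ 2 * rp) := by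
    apply ge_of_tendsto hflim
    filter_upwards [hIoo] with r hrm
    exact le_of_lt (hf r hrm)
  rcases lt_or_eq_of_le hge with hlt | heq0
  · exact hlt
  · exfalso
    exact (key (by linarith)).2
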